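/- arXiv:2102.00710 — 4 statements merged into one kernel-verified Lean document; each statement's English description precedes it below -/
import Mathlib

section
/- For real numbers a, b with a ≠ b and a ≠ −(n−1)b, the n×n matrix 𝓜(a,b) is invertible with inverse 𝓜(a + (n−2)b, −b) / ((a−b)(a + (n−1)b)). -/
/-- `calM n a b` is the n×n matrix with diagonal entries `a` and off-diagonal entries `b`. -/
def calM (n : ℕ) (a b : ℝ) : Matrix (Fin n) (Fin n) ℝ :=
  Matrix.of fun i j => if i = j then a else b

theorem calM_inv (n : ℕ) (hn : 1 ≤ n) (a b : ℝ) (hab : a ≠ b)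
    (hab' : a ≠ -((n : ℝ) - 1) * b) :
    IsUnit (calM n a b) ∧
    (calM n a b)⁻¹ =
      ((a - b) * (a + ((n : ℝ) - 1) * b))⁻¹ • calM n (a + ((n : ℝ) - 2) * b) (-b) := by
  have hc : (a - b) * (a + ((n : ℝ) - 1) * b) ≠ 0 := by
    apply mul_ne_zero (sub_ne_zero.mpr hab)
    intro h
    exact hab' (by linarith)
  have key : calM n a b * calM n (a + ((n : ℝ) - 2) * b) (-b)
      = ((a - b) * (a + ((n : ℝ) - 1) * b)) • (1 : Matrix (Fin n) (Fin n) ℝ) := by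
    ext i j
    simp only [Matrix.mul_apply, calM, Matrix.of_apply, Matrix.smul_apply, Matrix.one_apply,
      smul_eq_mul]
    by_cases hij : i = j
    · subst hij
      rw [if_pos rfl, mul_one, ← Finset.add_sum_erase _ _ (Finset.mem_univ i)]
      rw [if_pos rfl, if_pos rfl]
      have hrest : ∀ k ∈ Finset.univ.erase i,
          (if i = k then a else b) * (if k = i then a + ((n : ℝ) - 2) * b else -b)
            = b * (-b) := by
        intro k hk
        have hk' : k ≠ i := Finset.ne_of_mem_erase hk
        rw [if_neg (fun h => hk' h.symm), if_neg hk']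
      rw [Finset.sum_congr rfl hrest, Finset.sum_const]
      have hcard : (Finset.univ.erase i).card = n - 1 := by
        rw [Finset.card_erase_of_mem (Finset.mem_univ i), Finset.card_univ, Fintype.card_fin]
      rw [hcard, nsmul_eq_mul]
      have : ((n - 1 : ℕ) : ℝ) = (n : ℝ) - 1 := by
        push_cast [Nat.cast_sub hn]; ring
      rw [this]; ring
    · rw [if_neg hij, mul_zero]
      have h2 : 2 ≤ n := by
        have := Fintype.one_lt_card_iff.mpr ⟨i, j, hij⟩
        exact Nat.succ_le_of_lt (by simpa using this)
      rw [← Finset.add_sum_erase _ _ (Finset.mem_univ i), if_pos rfl,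
        if_neg hij]
      have hjmem : j ∈ Finset.univ.erase i := Finset.mem_erase.mpr ⟨fun h => hij h.symm, Finset.mem_univ j⟩
      rw [← Finset.add_sum_erase _ _ hjmem, if_neg (fun h => hij h), if_pos rfl]
      have hrest : ∀ k ∈ (Finset.univ.erase i).erase j,
          (if i = k then a else b) * (if k = j then a + ((n : ℝ) - 2) * b else -b)
            = b * (-b) := by
        intro k hk
        have hkj : k ≠ j := Finset.ne_of_mem_erase hk
        have hki : k ≠ i := Finset.ne_of_mem_erase (Finset.mem_of_mem_erase hk)
        rw [if_neg (fun h => hki h.symm), if_neg hkj]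
      rw [Finset.sum_congr rfl hrest, Finset.sum_const]
      have hcard : ((Finset.univ.erase i).erase j).card = n - 2 := by
        rw [Finset.card_erase_of_mem hjmem, Finset.card_erase_of_mem (Finset.mem_univ i),
          Finset.card_univ, Fintype.card_fin]
        omega
      rw [hcard, nsmul_eq_mul]
      have : ((n - 2 : ℕ) : ℝ) = (n : ℝ) - 2 := by
        push_cast [Nat.cast_sub h2]; ring
      rw [this]; ring
  have hone : calM n a b *
      (((a - b) * (a + ((n : ℝ) - 1) * b))⁻¹ • calM n (a + ((n : ℝ) - 2) * b) (-b)) = 1 := by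
    rw [Matrix.mul_smul, key, smul_smul, inv_mul_cancel₀ hc, one_smul]
  exact ⟨(Matrix.isUnit_iff_isUnit_det _).mpr (Matrix.isUnit_det_of_right_inverse hone), Matrix.inv_eq_right_inv hone⟩
end

section
/- Let a, b > 0 and define f(x) = a·x/(x+a) + b on [0,∞). Then ℓ = (√b·√(4a+b) + b)/2 is the unique nonnegative fixed point of f, and for all x ≥ 0, |f(x) − ℓ| ≤ (a/(a+ℓ))·|x − ℓ|. -/
theorem fixed_point_contraction (a b : ℝ) (ha : 0 < a) (hb : 0 < b)
    (f : ℝ → ℝ) (hf : ∀ x, f x = a * x / (x + a) + b)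
    (ℓ : ℝ) (hℓ : ℓ = (Real.sqrt b * Real.sqrt (4 * a + b) + b) / 2) :
    0 ≤ ℓ ∧ f ℓ = ℓ ∧ (∀ x, 0 ≤ x → f x = x → x = ℓ) ∧
    (∀ x, 0 ≤ x → |f x - ℓ| ≤ (a / (a + ℓ)) * |x - ℓ|) := by
  set s := Real.sqrt b * Real.sqrt (4 * a + b) with hs
  have hs0 : 0 ≤ s := mul_nonneg (Real.sqrt_nonneg _) (Real.sqrt_nonneg _)
  have hs2 : s ^ 2 = b * (4 * a + b) := by
    rw [hs, mul_pow, Real.sq_sqrt hb.le, Real.sq_sqrt (by linarith)]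
  have hsb : b < s := by nlinarith
  have hℓb : b < ℓ := by rw [hℓ]; linarith
  have hℓ0 : 0 < ℓ := lt_trans hb hℓb
  have hfix : ℓ ^ 2 = b * ℓ + a * b := by
    rw [hℓ]; nlinarith [hs2]
  have hℓa : ℓ + a ≠ 0 := by positivity
  have hfℓ : f ℓ = ℓ := by
    rw [hf]; field_simp; nlinarith [hfix]
  refine ⟨hℓ0.le, hfℓ, ?_, ?_⟩
  · intro x hx hfx
    rw [hf] at hfx
    have hxa : x + a ≠ 0 := by positivity
    have : x ^ 2 = b * x + a * b := by
      field_simp at hfx; nlinarith [hfx]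
    have hfac : (x - ℓ) * (x + ℓ - b) = 0 := by nlinarith [hfix, this]
    have : x + ℓ - b > 0 := by linarith
    rcases mul_eq_zero.mp hfac with h | h
    · linarith
    · linarith
  · intro x hx
    have hxa : (0:ℝ) < x + a := by linarith
    have key : f x - ℓ = (a ^ 2 / ((x + a) * (ℓ + a))) * (x - ℓ) := by
      rw [hf]
      field_simp
      linear_combination (-(x + a)) * hfix
    rw [key, abs_mul, abs_of_nonneg (by positivity : (0:ℝ) ≤ a ^ 2 / ((x + a) * (ℓ + a)))]
    apply mul_le_mul_of_nonneg_right _ (abs_nonneg _)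
    rw [div_le_div_iff₀ (by positivity) (by positivity)]
    nlinarith [mul_nonneg (mul_nonneg ha.le hℓ0.le) hx, mul_nonneg (mul_nonneg ha.le ha.le) hx]
end

section
/- Fix n ≥ 2 and σ_m, σ_d > 0. Define α_0 = n σ_0²/(n−1) ≥ 0 and α_{t+1} = σ_m² α_t / ((n/(n−1)) α_t + σ_m²) + (n/(n−1)) σ_d². Then α_t converges to α_∞ = (σ_d·√(4σ_m² + ((n/(n−1))σ_d)²) + (n/(n−1))σ_d²)/2. -/
open Filter

set_option maxHeartbeats 1000000

theorem alpha_converges (n : ℕ) (hn : 2 ≤ n) (σ0 σm σd : ℝ)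
    (hσ0 : 0 ≤ σ0) (hσm : 0 < σm) (hσd : 0 < σd)
    (α : ℕ → ℝ)
    (hα0 : α 0 = (n : ℝ) * σ0 ^ 2 / ((n : ℝ) - 1))
    (hα : ∀ t, α (t + 1) =
      σm ^ 2 * α t / (((n : ℝ) / ((n : ℝ) - 1)) * α t + σm ^ 2)
        + ((n : ℝ) / ((n : ℝ) - 1)) * σd ^ 2) :
    Tendsto α atTop (nhds
      ((σd * Real.sqrt (4 * σm ^ 2 + (((n : ℝ) / ((n : ℝ) - 1)) * σd) ^ 2)
        + ((n : ℝ) / ((n : ℝ) - 1)) * σd ^ 2) / 2)) := by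
  have hn1 : (1 : ℝ) ≤ (n : ℝ) - 1 := by
    have : (2 : ℝ) ≤ (n : ℝ) := by exact_mod_cast hn
    linarith
  set c : ℝ := (n : ℝ) / ((n : ℝ) - 1) with hc_def
  have hc : 0 < c := by
    apply div_pos <;> nlinarith
  set s : ℝ := Real.sqrt (4 * σm ^ 2 + (c * σd) ^ 2) with hs_def
  have hs_arg : (0:ℝ) ≤ 4 * σm ^ 2 + (c * σd) ^ 2 := by positivity
  have hs2 : s ^ 2 = 4 * σm ^ 2 + (c * σd) ^ 2 := Real.sq_sqrt hs_arg
  have hs_ge : c * σd ≤ s := by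
    rw [hs_def]
    have h1 : (c * σd) ^ 2 ≤ 4 * σm ^ 2 + (c * σd) ^ 2 := by nlinarith
    calc c * σd = Real.sqrt ((c * σd) ^ 2) := (Real.sqrt_sq (by positivity)).symm
      _ ≤ _ := Real.sqrt_le_sqrt h1
  set L : ℝ := (σd * s + c * σd ^ 2) / 2 with hL_def
  clear_value L s c
  have hσm2 : 0 < σm ^ 2 := pow_pos hσm 2
  have hσd2 : 0 < σd ^ 2 := pow_pos hσd 2
  have hk : 0 < c * σd ^ 2 := mul_pos hc hσd2
  have hLk : c * σd ^ 2 ≤ L := by rw [hL_def]; nlinarith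
  have hL_pos : 0 < L := lt_of_lt_of_le hk hLk
  have hL2 : L ^ 2 = c * σd ^ 2 * L + σd ^ 2 * σm ^ 2 := by
    rw [hL_def]
    linear_combination (σd ^ 2 / 4) * hs2
  have hdenL : 0 < c * L + σm ^ 2 := by nlinarith [mul_pos hc hL_pos]
  -- D and q
  set D : ℝ := c * (c * σd ^ 2) + σm ^ 2 with hD_def
  have hck : 0 < c * (c * σd ^ 2) := mul_pos hc hk
  have hD : 0 < D := by rw [hD_def]; linarith
  have hσmD : σm ^ 2 < D := by rw [hD_def]; linarith
  set q : ℝ := (σm ^ 2 / D) ^ 2 with hq_def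
  clear_value D q
  have hq0 : 0 ≤ q := by rw [hq_def]; positivity
  have hq1 : q < 1 := by
    rw [hq_def]
    have h1 : σm ^ 2 / D < 1 := (div_lt_one hD).mpr hσmD
    have h0 : 0 ≤ σm ^ 2 / D := by positivity
    nlinarith
  -- nonnegativity
  have hnonneg : ∀ t, 0 ≤ α t := by
    intro t
    induction t with
    | zero => rw [hα0]; positivity
    | succ t ih =>
      rw [hα t]
      have hden : 0 < c * α t + σm ^ 2 := by nlinarith [mul_nonneg hc.le ih]
      have h1 : 0 ≤ σm ^ 2 * α t / (c * α t + σm ^ 2) :=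
        div_nonneg (mul_nonneg hσm2.le ih) hden.le
      linarith
  have hgek : ∀ t, c * σd ^ 2 ≤ α (t + 1) := by
    intro t
    rw [hα t]
    have hden : 0 < c * α t + σm ^ 2 := by nlinarith [mul_nonneg hc.le (hnonneg t)]
    have h1 : 0 ≤ σm ^ 2 * α t / (c * α t + σm ^ 2) :=
      div_nonneg (mul_nonneg hσm2.le (hnonneg t)) hden.le
    linarith
  -- contraction step
  have hstep : ∀ x : ℝ, c * σd ^ 2 ≤ x →
      |σm ^ 2 * x / (c * x + σm ^ 2) + c * σd ^ 2 - L| ≤ q * |x - L| := by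
    intro x hx
    have hdenx : 0 < c * x + σm ^ 2 := by nlinarith
    have hfixL : σm ^ 2 * L / (c * L + σm ^ 2) = L - c * σd ^ 2 := by
      rw [div_eq_iff (ne_of_gt hdenL)]
      ring_nf
      nlinarith [hL2]
    have h2 : σm ^ 2 * x / (c * x + σm ^ 2) - σm ^ 2 * L / (c * L + σm ^ 2)
        = σm ^ 2 * σm ^ 2 * (x - L) / ((c * x + σm ^ 2) * (c * L + σm ^ 2)) := by
      rw [div_sub_div _ _ hdenx.ne' hdenL.ne']
      ring
    have key : σm ^ 2 * x / (c * x + σm ^ 2) + c * σd ^ 2 - L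
        = σm ^ 2 * σm ^ 2 * (x - L) / ((c * x + σm ^ 2) * (c * L + σm ^ 2)) := by
      rw [hfixL] at h2; linarith
    rw [key, abs_div, abs_mul, abs_mul]
    have hP : 0 < (c * x + σm ^ 2) * (c * L + σm ^ 2) := mul_pos hdenx hdenL
    rw [abs_of_pos hP, abs_of_nonneg hσm2.le, div_le_iff₀ hP]
    have hDx : D ≤ c * x + σm ^ 2 := by rw [hD_def]; nlinarith [mul_le_mul_of_nonneg_left hx hc.le]
    have hDL : D ≤ c * L + σm ^ 2 := by rw [hD_def]; nlinarith [mul_le_mul_of_nonneg_left hLk hc.le]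
    have hqD : q * D ^ 2 = σm ^ 2 * σm ^ 2 := by
      rw [hq_def]; field_simp
    have habs : 0 ≤ |x - L| := abs_nonneg _
    have hPD : D * D ≤ (c * x + σm ^ 2) * (c * L + σm ^ 2) :=
      mul_le_mul hDx hDL hD.le hdenx.le
    nlinarith [mul_le_mul_of_nonneg_left hPD (mul_nonneg hq0 habs)]
  -- geometric bound
  have hbound : ∀ t, |α (t + 1) - L| ≤ |α 1 - L| * q ^ t := by
    intro t
    induction t with
    | zero => simp
    | succ t ih =>
      have h1 := hstep (α (t + 1)) (hgek t)
      rw [← hα (t + 1)] at h1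
      calc |α (t + 1 + 1) - L| ≤ q * |α (t + 1) - L| := h1
        _ ≤ q * (|α 1 - L| * q ^ t) := mul_le_mul_of_nonneg_left ih hq0
        _ = |α 1 - L| * q ^ (t + 1) := by ring
  -- convergence
  have hq_tendsto : Tendsto (fun t : ℕ => |α 1 - L| * q ^ t) atTop (nhds 0) := by
    have := tendsto_pow_atTop_nhds_zero_of_lt_one hq0 hq1
    simpa using this.const_mul (|α 1 - L|)
  have habs_tendsto : Tendsto (fun t : ℕ => |α (t + 1) - L|) atTop (nhds 0) :=
    squeeze_zero (fun t => abs_nonneg _) hbound hq_tendsto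
  have hshift : Tendsto (fun t : ℕ => α (t + 1)) atTop (nhds L) := by
    rw [tendsto_iff_dist_tendsto_zero]
    simpa [Real.dist_eq] using habs_tendsto
  rwa [← tendsto_add_atTop_iff_nat 1]
end

section
/- Define Var(ρ) = (ρ²σ_m² + σ_d²)/(2ρ − (n/(n−1))ρ²) for ρ ∈ (0,1] (with (n,ρ) ≠ (2,1)). Then Var attains its unique minimum on this interval at ρ★ = (σ_d·√(4σ_m² + ((n/(n−1))σ_d)²) − (n/(n−1))σ_d²)/(2σ_m²). -/
set_option maxHeartbeats 1000000


theorem var_min_at_rho_star (n : ℕ) (hn : 2 ≤ n) (σm σd : ℝ)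
    (hσm : 0 < σm) (hσd : 0 < σd)
    (Var : ℝ → ℝ)
    (hVar : ∀ ρ, Var ρ = (ρ ^ 2 * σm ^ 2 + σd ^ 2) /
      (2 * ρ - ((n : ℝ) / ((n : ℝ) - 1)) * ρ ^ 2))
    (ρstar : ℝ)
    (hρstar : ρstar = (σd * Real.sqrt (4 * σm ^ 2 + (((n : ℝ) / ((n : ℝ) - 1)) * σd) ^ 2)
      - ((n : ℝ) / ((n : ℝ) - 1)) * σd ^ 2) / (2 * σm ^ 2)) :
    (0 < ρstar ∧ ρstar ≤ 1 ∧ ¬(n = 2 ∧ ρstar = 1)) ∧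
    ∀ ρ, 0 < ρ → ρ ≤ 1 → ¬(n = 2 ∧ ρ = 1) → ρ ≠ ρstar → Var ρstar < Var ρ := by
  set c : ℝ := (n : ℝ) / ((n : ℝ) - 1) with hc
  have hn2 : (2 : ℝ) ≤ (n : ℝ) := by exact_mod_cast hn
  have hn1 : (1 : ℝ) ≤ (n : ℝ) - 1 := by linarith
  have hn1' : (0 : ℝ) < (n : ℝ) - 1 := by linarith
  have hc1 : 1 < c := by
    rw [hc, lt_div_iff₀ hn1']; linarith
  have hc2 : c ≤ 2 := by
    rw [hc, div_le_iff₀ hn1']; linarith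
  have hc2' : n ≠ 2 → c < 2 := by
    intro h
    have h3 : 3 ≤ n := by omega
    have h3' : (3 : ℝ) ≤ (n : ℝ) := by exact_mod_cast h3
    rw [hc, div_lt_iff₀ hn1']; linarith
  set s : ℝ := Real.sqrt (4 * σm ^ 2 + (c * σd) ^ 2) with hsdef
  have harg : (0 : ℝ) ≤ 4 * σm ^ 2 + (c * σd) ^ 2 := by positivity
  have hs : s ^ 2 = 4 * σm ^ 2 + (c * σd) ^ 2 := Real.sq_sqrt harg
  have hsgt : c * σd < s := by
    have h1 : Real.sqrt ((c * σd) ^ 2) < s := by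
      apply Real.sqrt_lt_sqrt (by positivity)
      nlinarith
    rwa [Real.sqrt_sq (by positivity)] at h1
  have hρpos : 0 < ρstar := by
    rw [hρstar]
    apply div_pos _ (by positivity)
    nlinarith
  -- key quadratic identity
  have hq : σm ^ 2 * ρstar ^ 2 + c * σd ^ 2 * ρstar = σd ^ 2 := by
    rw [hρstar]
    field_simp
    linear_combination hs
  have hρlt1 : ρstar < 1 := by
    by_contra h
    push_neg at h
    nlinarith [mul_pos (pow_pos hσm 2) (pow_pos hρpos 2),
      mul_le_mul_of_nonneg_left h (by positivity : (0:ℝ) ≤ c * σd ^ 2),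
      mul_pos (sub_pos.mpr hc1) (pow_pos hσd 2)]
  have hDstar : 0 < 2 * ρstar - c * ρstar ^ 2 := by
    have : c * ρstar < 2 := by nlinarith
    nlinarith
  refine ⟨⟨hρpos, le_of_lt hρlt1, fun h => by linarith [h.2]⟩, ?_⟩
  intro ρ hρ0 hρle hne hneq
  have hcρ : c * ρ < 2 := by
    rcases lt_or_eq_of_le hρle with h1 | h1
    · nlinarith
    · have : n ≠ 2 := fun h2 => hne ⟨h2, h1⟩
      have := hc2' this
      nlinarith
  have hD : 0 < 2 * ρ - c * ρ ^ 2 := by nlinarith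
  rw [hVar ρ, hVar ρstar, div_lt_div_iff₀ hDstar hD]
  have key : ρstar * ((ρ ^ 2 * σm ^ 2 + σd ^ 2) * (2 * ρstar - c * ρstar ^ 2)
      - (ρstar ^ 2 * σm ^ 2 + σd ^ 2) * (2 * ρ - c * ρ ^ 2))
      = (ρ - ρstar) ^ 2 * (σm ^ 2 * ρstar ^ 2 + σd ^ 2) := by
    linear_combination ((ρ - ρstar) * (ρ + ρstar)) * hq
  have hpos : 0 < (ρ - ρstar) ^ 2 * (σm ^ 2 * ρstar ^ 2 + σd ^ 2) := by
    have : ρ - ρstar ≠ 0 := sub_ne_zero.mpr hneq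
    positivity
  nlinarith [key, hpos, hρpos]
end
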